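/- Let θ₂ and θ₂' be two 2-truncated expansions of π (with the same subspace I₂). Then: (i) the map π → W, g ↦ θ₂'(g) − θ₂(g), is a group homomorphism, and there is a unique ℝ-linear map F : H → W with F([g]) = θ₂'(g) − θ₂(g) for all g ∈ π; (ii) for every φ ∈ Aut(π) with (|φ| ⊗ |φ|)(I₂) ⊆ I₂ and (|φ⁻¹| ⊗ |φ⁻¹|)(I₂) ⊆ I₂, one has τ₁^θ(φ) − τ₁^{θ'}(φ) = |φ|_W ∘ F ∘ |φ|⁻¹ − F. Hence the two cocycles τ₁^θ and τ₁^{θ'} differ by the coboundary of F, so their cohomology classes in the first group cohomology of the I₂-preserving automorphisms with coefficients in Hom_ℝ(H, W) coincide. (Second assertion of the paper's Proposition 2.4, in truncated form.) -/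

import Mathlib

open scoped TensorProduct

/-- `H := ℝ ⊗_ℤ π^ab`. -/
abbrev HH (π : Type*) [Group π] := TensorProduct ℤ ℝ (Additive (Abelianization π))

/-- `[g] := 1 ⊗ (class of g) ∈ H`. -/
noncomputable def cl {π : Type*} [Group π] (g : π) : HH π :=
  (1 : ℝ) ⊗ₜ[ℤ] (Additive.ofMul (Abelianization.of g))

/-- `|φ| : H → H`, the `ℝ`-linear map induced by `φ ∈ Aut(π)`. -/
noncomputable def indH {π : Type*} [Group π] (φ : MulAut π) : HH π →ₗ[ℝ] HH π :=
  LinearMap.baseChange ℝ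
    ((MonoidHom.toAdditive (Abelianization.map φ.toMonoidHom)).toIntLinearMap)

/-- `|φ|_W : W → W`, the map induced by `|φ| ⊗ |φ|` on `W = (H ⊗_ℝ H) ⧸ I₂`, given that
`(|φ| ⊗ |φ|)(I₂) ⊆ I₂`. -/
noncomputable def indW {π : Type*} [Group π] (I₂ : Submodule ℝ (HH π ⊗[ℝ] HH π))
    (φ : MulAut π)
    (hφ : Submodule.map (TensorProduct.map (indH φ) (indH φ)) I₂ ≤ I₂) :
    ((HH π ⊗[ℝ] HH π) ⧸ I₂) →ₗ[ℝ] ((HH π ⊗[ℝ] HH π) ⧸ I₂) :=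
  Submodule.mapQ I₂ I₂ (TensorProduct.map (indH φ) (indH φ))
    (Submodule.map_le_iff_le_comap.mp hφ)


section Aux
variable {π : Type*} [Group π]

lemma indH_cl (φ : MulAut π) (g : π) : indH φ (cl g) = cl (φ g) := rfl

lemma hh_ext {N : Type*} [AddCommGroup N] [Module ℝ N]
    (F₁ F₂ : HH π →ₗ[ℝ] N) (h : ∀ g : π, F₁ (cl g) = F₂ (cl g)) : F₁ = F₂ := by
  apply LinearMap.ext
  intro z
  induction z using TensorProduct.induction_on with
  | zero => simp
  | tmul r x =>
      obtain ⟨g, hg⟩ : ∃ g : π, Abelianization.of g = Additive.toMul x := by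
        induction (Additive.toMul x) using QuotientGroup.induction_on with
        | H g => exact ⟨g, rfl⟩
      have hx : (Additive.ofMul (Abelianization.of g)) = x := by
        rw [hg]; rfl
      have : (r ⊗ₜ[ℤ] x : HH π) = r • cl g := by
        rw [cl, TensorProduct.smul_tmul', smul_eq_mul, mul_one, hx]
      rw [this, map_smul, map_smul, h g]
  | add a b ha hb => simp [map_add, ha, hb]

end Aux

/-- Let `θ₂, θ₂'` be two 2-truncated expansions of `π` (with the same `I₂`).
(i) `g ↦ θ₂' g − θ₂ g` is a group homomorphism into the additive group of `W`, and there is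
a unique `ℝ`-linear map `F : H → W` with `F [g] = θ₂' g − θ₂ g` for all `g`;
(ii) for every `I₂`-preserving `φ ∈ Aut(π)` (with `φ⁻¹` also `I₂`-preserving),
`τ₁^θ(φ) − τ₁^{θ'}(φ) = |φ|_W ∘ F ∘ |φ|⁻¹ − F`, i.e. the two cocycles differ by the
coboundary of `F`. -/
theorem statement10 {π : Type*} [Group π] (I₂ : Submodule ℝ (HH π ⊗[ℝ] HH π))
    (θ₂ θ₂' : π → (HH π ⊗[ℝ] HH π) ⧸ I₂)
    (hθ : ∀ g h : π, θ₂ (g * h) = θ₂ g + θ₂ h + I₂.mkQ (cl g ⊗ₜ[ℝ] cl h))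
    (hθ' : ∀ g h : π, θ₂' (g * h) = θ₂' g + θ₂' h + I₂.mkQ (cl g ⊗ₜ[ℝ] cl h)) :
    (∀ g h : π, θ₂' (g * h) - θ₂ (g * h) = (θ₂' g - θ₂ g) + (θ₂' h - θ₂ h)) ∧
    (∃! F : HH π →ₗ[ℝ] ((HH π ⊗[ℝ] HH π) ⧸ I₂), ∀ g : π, F (cl g) = θ₂' g - θ₂ g) ∧
    (∀ (φ : MulAut π)
      (hφ : Submodule.map (TensorProduct.map (indH φ) (indH φ)) I₂ ≤ I₂),
      Submodule.map (TensorProduct.map (indH φ⁻¹) (indH φ⁻¹)) I₂ ≤ I₂ →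
      ∀ F τφ τ'φ : HH π →ₗ[ℝ] ((HH π ⊗[ℝ] HH π) ⧸ I₂),
        (∀ g : π, F (cl g) = θ₂' g - θ₂ g) →
        (∀ g : π, τφ (cl g) = θ₂ g - indW I₂ φ hφ (θ₂ (φ⁻¹ g))) →
        (∀ g : π, τ'φ (cl g) = θ₂' g - indW I₂ φ hφ (θ₂' (φ⁻¹ g))) →
        τφ - τ'φ = (indW I₂ φ hφ).comp (F.comp (indH φ⁻¹)) - F) := by
  -- homomorphism property
  have hom : ∀ g h : π, θ₂' (g * h) - θ₂ (g * h) = (θ₂' g - θ₂ g) + (θ₂' h - θ₂ h) := by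
    intro g h
    rw [hθ, hθ']
    abel
  refine ⟨hom, ?_, ?_⟩
  · -- existence and uniqueness of F
    have hone : θ₂' 1 - θ₂ 1 = 0 := by
      have := hom 1 1
      rw [mul_one] at this
      -- a = a + a implies a = 0
      have h0 : θ₂' 1 - θ₂ 1 = (θ₂' 1 - θ₂ 1) + (θ₂' 1 - θ₂ 1) := this
      abel_nf at h0 ⊢
      linear_combination (norm := abel_nf) -h0
    set δ : π →* Multiplicative ((HH π ⊗[ℝ] HH π) ⧸ I₂) :=
      { toFun := fun g => Multiplicative.ofAdd (θ₂' g - θ₂ g)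
        map_one' := by simpa using congrArg Multiplicative.ofAdd hone
        map_mul' := fun g h => congrArg Multiplicative.ofAdd (hom g h) } with hδ
    set δ' : Additive (Abelianization π) →+ ((HH π ⊗[ℝ] HH π) ⧸ I₂) :=
      MonoidHom.toAdditiveLeft (Abelianization.lift δ) with hδ'
    refine ⟨LinearMap.liftBaseChange ℝ δ'.toIntLinearMap, ?_, ?_⟩
    · intro g
      show LinearMap.liftBaseChange ℝ δ'.toIntLinearMap
          ((1 : ℝ) ⊗ₜ[ℤ] (Additive.ofMul (Abelianization.of g))) = _
      rw [LinearMap.liftBaseChange_tmul, one_smul]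
      simp [hδ', hδ]
    · intro G hG
      exact hh_ext _ _ (fun g => by
        rw [hG g]
        show _ = LinearMap.liftBaseChange ℝ δ'.toIntLinearMap
          ((1 : ℝ) ⊗ₜ[ℤ] (Additive.ofMul (Abelianization.of g)))
        rw [LinearMap.liftBaseChange_tmul, one_smul]
        simp [hδ', hδ])
  · intro φ hφ _ F τφ τ'φ hF hτ hτ'
    refine hh_ext _ _ (fun g => ?_)
    simp only [LinearMap.sub_apply, LinearMap.comp_apply, indH_cl, hτ g, hτ' g,
      hF, hF (φ⁻¹ g)]
    rw [map_sub (indW I₂ φ hφ)]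
    abel
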